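/- Let 1 < p < N, 0 ≤ s < p, p*(s) = p(N−s)/(N−p), and on ℝ^N_+ set X = (|x|²+(1−y)²)/(|x|²+(1+y)²) and V_p as in the improved Hardy inequality. Then the infimum over nonzero u ∈ C_c^1(ℝ^N_+) of ∫_{ℝ^N_+} |∇u|^p dxdy divided by (∫_{ℝ^N_+} |u|^{p*(s)} (|x|²+(1−y)²)^{−s/2} V_p^{p/2} (1 − X^{(N−p)/(2(p−1))})^{−(p−1)(p−s)/(N−p)} dxdy)^{p/p*(s)} equals 0. -/

import Mathlib

set_option maxHeartbeats 1000000


open Real MeasureTheory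
open Metric

/-- `|x|² + (1−y)²` for `z = (x, y) ∈ ℝ^{n} × ℝ`. -/
noncomputable def AA {n : ℕ} (z : EuclideanSpace ℝ (Fin (n + 1))) : ℝ :=
  (∑ i : Fin n, z (Fin.castSucc i) ^ 2) + (1 - z (Fin.last n)) ^ 2

/-- `|x|² + (1+y)²` for `z = (x, y) ∈ ℝ^{n} × ℝ`. -/
noncomputable def BB {n : ℕ} (z : EuclideanSpace ℝ (Fin (n + 1))) : ℝ :=
  (∑ i : Fin n, z (Fin.castSucc i) ^ 2) + (1 + z (Fin.last n)) ^ 2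

/-- `X = (|x|²+(1−y)²)/(|x|²+(1+y)²)`. -/
noncomputable def XX {n : ℕ} (z : EuclideanSpace ℝ (Fin (n + 1))) : ℝ := AA z / BB z

/-- The potential `V_p` of the improved Hardy inequality (with `N = n + 1`). -/
noncomputable def Vp {n : ℕ} (p : ℝ) (z : EuclideanSpace ℝ (Fin (n + 1))) : ℝ :=
  (1 + XX z ^ (((n + 1 : ℝ) - 1) / (p - 1))
    - 2 * XX z ^ (((n + 1 : ℝ) - p) / (2 * (p - 1))) * (BB z)⁻¹ * (‖z‖ ^ 2 - 1))
  / (1 - XX z ^ (((n + 1 : ℝ) - p) / (2 * (p - 1)))) ^ 2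

lemma AA_nonneg {n : ℕ} (z : EuclideanSpace ℝ (Fin (n + 1))) : 0 ≤ AA z :=
  add_nonneg (Finset.sum_nonneg fun _ _ => sq_nonneg _) (sq_nonneg _)

lemma AA_pos {n : ℕ} {z : EuclideanSpace ℝ (Fin (n+1))} (h : z (Fin.last n) < 1) :
    0 < AA z := by
  have h1 : (0:ℝ) ≤ ∑ i : Fin n, z (Fin.castSucc i)^2 :=
    Finset.sum_nonneg fun _ _ => sq_nonneg _
  have h2 : (0:ℝ) < (1 - z (Fin.last n))^2 := pow_pos (by linarith) 2
  unfold AA; linarith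

lemma one_le_BB {n : ℕ} {z : EuclideanSpace ℝ (Fin (n + 1))} (h : 0 ≤ z (Fin.last n)) :
    1 ≤ BB z := by
  have h1 : (0:ℝ) ≤ ∑ i : Fin n, z (Fin.castSucc i) ^ 2 :=
    Finset.sum_nonneg fun _ _ => sq_nonneg _
  have : (1:ℝ) ≤ (1 + z (Fin.last n)) ^ 2 := by nlinarith
  unfold BB; linarith

lemma BB_sub_AA {n : ℕ} (z : EuclideanSpace ℝ (Fin (n + 1))) :
    BB z - AA z = 4 * z (Fin.last n) := by
  unfold AA BB; ring

lemma XX_nonneg {n : ℕ} {z : EuclideanSpace ℝ (Fin (n + 1))} (h : 0 < z (Fin.last n)) :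
    0 ≤ XX z :=
  div_nonneg (AA_nonneg z) (by linarith [one_le_BB h.le])

lemma XX_lt_one {n : ℕ} {z : EuclideanSpace ℝ (Fin (n + 1))} (h : 0 < z (Fin.last n)) :
    XX z < 1 := by
  have hB : (0:ℝ) < BB z := by linarith [one_le_BB h.le]
  rw [XX, div_lt_one hB]
  have := BB_sub_AA z
  linarith

lemma norm_sq_eq {n : ℕ} (z : EuclideanSpace ℝ (Fin (n+1))) :
    ‖z‖ ^ 2 = (∑ i : Fin n, z (Fin.castSucc i) ^ 2) + z (Fin.last n) ^ 2 := by
  rw [EuclideanSpace.norm_eq, Real.sq_sqrt (by positivity)]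
  rw [Fin.sum_univ_castSucc]
  simp [sq_abs]

lemma Vp_nonneg {n : ℕ} {p : ℝ} (hp1 : 1 < p) (hpN : p < (n + 1 : ℝ))
    {z : EuclideanSpace ℝ (Fin (n + 1))} (hz : 0 < z (Fin.last n)) : 0 ≤ Vp p z := by
  unfold Vp
  set a : ℝ := ((n + 1 : ℝ) - p) / (2 * (p - 1)) with ha_def
  set b : ℝ := ((n + 1 : ℝ) - 1) / (p - 1) with hb_def
  have hp0 : (0:ℝ) < p - 1 := by linarith
  have ha : 0 < a := div_pos (by linarith) (by linarith)
  have hb : b = a + a + 1 := by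
    rw [hb_def, ha_def]; field_simp; ring
  have hB : (0:ℝ) < BB z := by linarith [one_le_BB hz.le]
  have hX0 : 0 ≤ XX z := XX_nonneg hz
  have hX1 : XX z < 1 := XX_lt_one hz
  have hnorm : ‖z‖ ^ 2 - 1 = (AA z + BB z - 4) / 2 := by
    have := norm_sq_eq z
    unfold AA BB
    rw [this]; ring
  apply div_nonneg _ (sq_nonneg _)
  rw [hnorm]
  rcases eq_or_lt_of_le hX0 with h0 | hXpos
  · rw [← h0, Real.zero_rpow (ne_of_gt ha), Real.zero_rpow (by rw [hb]; positivity)]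
    norm_num
  · have hXa : XX z ^ b = XX z ^ a * XX z ^ a * XX z := by
      rw [hb, Real.rpow_add hXpos, Real.rpow_add hXpos, Real.rpow_one]
    rw [hXa]
    have hXval : XX z * BB z = AA z := by
      rw [XX]; field_simp
    have ht0 : 0 ≤ XX z ^ a := Real.rpow_nonneg hX0 a
    have ht1 : XX z ^ a ≤ 1 := Real.rpow_le_one hX0 hX1.le ha.le
    -- numerator = (1 - X^a)(1 - X^a X) + 4 X^a / B ≥ 0
    have key : 1 + XX z ^ a * XX z ^ a * XX z - 2 * XX z ^ a * (BB z)⁻¹ * ((AA z + BB z - 4)/2)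
        = (1 - XX z ^ a) * (1 - XX z ^ a * XX z) + 4 * XX z ^ a / BB z := by
      simp only [XX]
      field_simp
      ring
    rw [key]
    have h2 : XX z ^ a * XX z ≤ 1 := by nlinarith
    have h3 : 0 ≤ 4 * XX z ^ a / BB z := by positivity
    nlinarith [mul_nonneg (sub_nonneg.2 ht1) (sub_nonneg.2 h2)]


lemma integrand_nonneg {n : ℕ} {p s : ℝ} (hp1 : 1 < p) (hpN : p < (n + 1 : ℝ))
    (u : EuclideanSpace ℝ (Fin (n + 1)) → ℝ) {z : EuclideanSpace ℝ (Fin (n + 1))}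
    (hz : 0 < z (Fin.last n)) :
    0 ≤ |u z| ^ (p * ((n + 1 : ℝ) - s) / ((n + 1 : ℝ) - p))
        * AA z ^ (-(s / 2)) * Vp p z ^ (p / 2)
        * (1 - XX z ^ (((n + 1 : ℝ) - p) / (2 * (p - 1))))
            ^ (-((p - 1) * (p - s) / ((n + 1 : ℝ) - p))) := by
  have hX0 : 0 ≤ XX z := XX_nonneg hz
  have hX1 : XX z < 1 := XX_lt_one hz
  have ha : 0 ≤ ((n + 1 : ℝ) - p) / (2 * (p - 1)) := by
    apply div_nonneg <;> linarith
  have hD : 0 ≤ 1 - XX z ^ (((n + 1 : ℝ) - p) / (2 * (p - 1))) :=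
    sub_nonneg.2 (Real.rpow_le_one hX0 hX1.le ha)
  exact mul_nonneg (mul_nonneg (mul_nonneg (Real.rpow_nonneg (abs_nonneg _) _)
    (Real.rpow_nonneg (AA_nonneg z) _)) (Real.rpow_nonneg (Vp_nonneg hp1 hpN hz) _))
    (Real.rpow_nonneg hD _)


private lemma scalar_core {ε σ y : ℝ} (hε : 0 < ε) (hε' : ε ≤ 1/10) (hσ0 : 0 ≤ σ)
    (hsum : σ + (y - 2*ε)^2 ≤ ε^2) :
    ε ≤ y ∧ y ≤ 3*ε ∧ σ ≤ ε^2 ∧ σ + (1-y)^2 ≤ 2 ∧ 2/5 ≤ σ + (1-y)^2 ∧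
      σ + (1+y)^2 ≤ 2 ∧ 1/5 * (σ + (1+y)^2) ≤ σ + (1-y)^2 ∧ σ + y^2 - 1 ≤ 0 := by
  have hy1 : ε ≤ y := by nlinarith
  have hy2 : y ≤ 3*ε := by nlinarith
  have hσ : σ ≤ ε^2 := by nlinarith
  refine ⟨hy1, hy2, hσ, by nlinarith, by nlinarith, by nlinarith, by nlinarith, by nlinarith⟩

private lemma num_lb_aux {Xb T Binv t : ℝ} (h7 : 0 ≤ Xb) (hT : 0 ≤ T) (hB : 0 ≤ Binv)
    (ht : t ≤ 0) : 1 ≤ 1 + Xb - 2*T*Binv*t := by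
  nlinarith [mul_nonneg (mul_nonneg hT hB) (neg_nonneg.2 ht)]

private lemma bernoulli_aux {X Xa a Ca ε : ℝ} (hX_lb : 1/5 ≤ X) (hX1 : X < 1) (ha : 0 < a)
    (hXa : X ^ a = Xa) (hCa1 : 1 ≤ Ca) (hCaa : a ≤ Ca) (h1X : 1 - X ≤ 12*ε) (hε : 0 ≤ ε) :
    1 - Xa ≤ 12 * Ca * ε := by
  have step : 1 - Xa ≤ Ca * (1 - X) := by
    rcases le_total a 1 with h | h
    · have h5 : X ^ (1:ℝ) ≤ X ^ a :=
        Real.rpow_le_rpow_of_exponent_ge (by linarith) hX1.le h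
      rw [Real.rpow_one, hXa] at h5
      nlinarith
    · have hber := one_add_mul_self_le_rpow_one_add (s := X - 1) (by linarith) h
      have h6 : 1 + a * (X - 1) ≤ Xa := by
        have e : (1 + (X - 1)) = X := by ring
        rw [e, hXa] at hber; linarith
      nlinarith [sub_nonneg.2 hX1.le]
  calc 1 - Xa ≤ Ca * (1 - X) := step
    _ ≤ 12 * Ca * ε := by nlinarith

lemma weight_lb {n : ℕ} {p s : ℝ} (hp1 : 1 < p) (hpN : p < (n + 1 : ℝ)) (hs0 : 0 ≤ s)
    (hsp : s < p) {ε : ℝ} (hε : 0 < ε) (hε' : ε ≤ 1/10)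
    {z : EuclideanSpace ℝ (Fin (n + 1))}
    (hz : dist z (EuclideanSpace.single (Fin.last n) (2*ε)) ≤ ε) :
    (2:ℝ) ^ (-(s/2))
      * ((12 * max (((n + 1 : ℝ) - p) / (2 * (p - 1))) 1)
          ^ (p + (p - 1) * (p - s) / ((n + 1 : ℝ) - p)))⁻¹
      * (ε ^ (p + (p - 1) * (p - s) / ((n + 1 : ℝ) - p)))⁻¹
    ≤ AA z ^ (-(s / 2)) * Vp p z ^ (p / 2)
        * (1 - XX z ^ (((n + 1 : ℝ) - p) / (2 * (p - 1))))
            ^ (-((p - 1) * (p - s) / ((n + 1 : ℝ) - p))) := by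
  have hp0 : (0:ℝ) < p - 1 := by linarith
  obtain ⟨a, ha_def⟩ : ∃ a : ℝ, a = ((n + 1 : ℝ) - p) / (2 * (p - 1)) := ⟨_, rfl⟩
  obtain ⟨q, hq_def⟩ : ∃ q : ℝ, q = (p - 1) * (p - s) / ((n + 1 : ℝ) - p) := ⟨_, rfl⟩
  obtain ⟨Ca, hCa_def⟩ : ∃ Ca : ℝ, Ca = max a 1 := ⟨_, rfl⟩
  obtain ⟨w, hw_def⟩ : ∃ w : ℝ, w = 12 * Ca * ε := ⟨_, rfl⟩
  simp only [← ha_def, ← hq_def]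
  simp only [← hCa_def]
  have ha : 0 < a := by rw [ha_def]; apply div_pos <;> linarith
  have hq : 0 < q := by
    rw [hq_def]; exact div_pos (mul_pos (by linarith) (by linarith)) (by linarith)
  have hCa1 : 1 ≤ Ca := hCa_def ▸ le_max_right _ _
  have hCaa : a ≤ Ca := hCa_def ▸ le_max_left _ _
  have hw : 0 < w := by rw [hw_def]; positivity
  obtain ⟨y, hy_def⟩ : ∃ y, y = z (Fin.last n) := ⟨_, rfl⟩
  obtain ⟨σ, hσ_def⟩ : ∃ σ, σ = ∑ i : Fin n, z (Fin.castSucc i) ^ 2 := ⟨_, rfl⟩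
  have hσ0 : 0 ≤ σ := hσ_def ▸ Finset.sum_nonneg fun _ _ => sq_nonneg _
  have hsum : σ + (y - 2*ε)^2 ≤ ε^2 := by
    have h := hz
    rw [EuclideanSpace.dist_eq] at h
    have hS0 : (0:ℝ) ≤ ∑ i, dist (z i) ((EuclideanSpace.single (Fin.last n) (2*ε)
        : EuclideanSpace ℝ (Fin (n+1))) i) ^ 2 := Finset.sum_nonneg fun _ _ => sq_nonneg _
    have h2 : (∑ i, dist (z i) ((EuclideanSpace.single (Fin.last n) (2*ε)
        : EuclideanSpace ℝ (Fin (n+1))) i) ^ 2) ≤ ε ^ 2 := by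
      have := pow_le_pow_left₀ (Real.sqrt_nonneg _) h 2
      rwa [Real.sq_sqrt hS0] at this
    rw [Fin.sum_univ_castSucc] at h2
    have e1 : ∀ i : Fin n, (EuclideanSpace.single (Fin.last n) (2*ε)
        : EuclideanSpace ℝ (Fin (n+1))) (Fin.castSucc i) = 0 := by
      intro i
      rw [EuclideanSpace.single_apply]
      simp [(Fin.castSucc_lt_last i).ne]
    have e2 : (EuclideanSpace.single (Fin.last n) (2*ε)
        : EuclideanSpace ℝ (Fin (n+1))) (Fin.last n) = 2*ε := by
      rw [EuclideanSpace.single_apply]; simp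
    simp only [e1, e2, Real.dist_eq, sub_zero] at h2
    rw [hσ_def, hy_def]
    simpa [sq_abs] using h2
  clear hz
  obtain ⟨hy1, hy2, hσ, hsc1, hsc2, hsc3, hsc4, hsc5⟩ := scalar_core hε hε' hσ0 hsum
  have hy0' : 0 < y := lt_of_lt_of_le hε hy1
  have hy0 : 0 < z (Fin.last n) := hy_def ▸ hy0'
  have hB1 : 1 ≤ BB z := one_le_BB hy0.le
  have hBpos : 0 < BB z := by linarith
  have hAA_def : AA z = σ + (1 - y)^2 := by rw [AA, hσ_def, hy_def]
  have hBB_def : BB z = σ + (1 + y)^2 := by rw [BB, hσ_def, hy_def]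
  have hAA_ub : AA z ≤ 2 := hAA_def ▸ hsc1
  have hAA_pos : 0 < AA z := by rw [hAA_def]; linarith
  have hX0 : 0 ≤ XX z := XX_nonneg hy0
  have hX1 : XX z < 1 := XX_lt_one hy0
  have hX_lb : (1:ℝ)/5 ≤ XX z := by
    rw [XX, le_div_iff₀ hBpos, hAA_def, hBB_def]
    linarith
  have h1X : 1 - XX z ≤ 12 * ε := by
    have e1 : 1 - XX z = (BB z - AA z) / BB z := by rw [XX]; field_simp
    rw [e1, BB_sub_AA, ← hy_def]
    calc 4 * y / BB z ≤ 4 * y := div_le_self (by linarith) hB1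
      _ ≤ 12 * ε := by linarith
  have hXa_lt1 : XX z ^ a < 1 := Real.rpow_lt_one hX0 hX1 ha
  have hXa_0 : 0 ≤ XX z ^ a := Real.rpow_nonneg hX0 a
  have hDub : 1 - XX z ^ a ≤ w :=
    hw_def ▸ bernoulli_aux hX_lb hX1 ha rfl hCa1 hCaa h1X hε.le
  have hD : 0 < 1 - XX z ^ a := by linarith
  have hznorm : ‖z‖ ^ 2 - 1 ≤ 0 := by
    have e := norm_sq_eq z
    rw [e, ← hσ_def, ← hy_def]
    linarith
  have hnum_lb : 1 ≤ 1 + XX z ^ (((n + 1 : ℝ) - 1) / (p - 1))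
      - 2 * XX z ^ a * (BB z)⁻¹ * (‖z‖ ^ 2 - 1) :=
    num_lb_aux (Real.rpow_nonneg hX0 _) hXa_0 (by positivity) hznorm
  have hVp_lb : ((w ^ 2)⁻¹ : ℝ) ≤ Vp p z := by
    unfold Vp
    rw [← ha_def]
    have hD2 : (0:ℝ) < (1 - XX z ^ a) ^ 2 := by positivity
    have step1 : ((w ^ 2)⁻¹ : ℝ) ≤ ((1 - XX z ^ a) ^ 2)⁻¹ :=
      inv_anti₀ hD2 (pow_le_pow_left₀ hD.le hDub 2)
    refine step1.trans ?_
    rw [inv_eq_one_div]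
    exact (div_le_div_iff_of_pos_right hD2).2 hnum_lb
  have hVp0 : 0 ≤ Vp p z := le_trans (by positivity) hVp_lb
  have f1 : (2:ℝ) ^ (-(s/2)) ≤ AA z ^ (-(s/2)) :=
    Real.rpow_le_rpow_of_nonpos hAA_pos hAA_ub (by linarith)
  have f2 : (w ^ p)⁻¹ ≤ Vp p z ^ (p/2) := by
    have h := Real.rpow_le_rpow (by positivity) hVp_lb (by positivity : (0:ℝ) ≤ p/2)
    calc (w ^ p)⁻¹ = ((w ^ 2)⁻¹ : ℝ) ^ (p/2) := by
          rw [Real.inv_rpow (by positivity), ← Real.rpow_natCast w 2,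
            ← Real.rpow_mul hw.le, show ((2:ℕ):ℝ) * (p/2) = p by push_cast; ring]
      _ ≤ Vp p z ^ (p/2) := h
  have f3 : (w ^ q)⁻¹ ≤ (1 - XX z ^ a) ^ (-q) := by
    have h := Real.rpow_le_rpow_of_nonpos hD hDub (neg_nonpos.2 hq.le)
    rwa [Real.rpow_neg hw.le] at h
  have prod_le : (2:ℝ) ^ (-(s/2)) * (w ^ p)⁻¹ * (w ^ q)⁻¹
      ≤ AA z ^ (-(s / 2)) * Vp p z ^ (p / 2) * (1 - XX z ^ a) ^ (-q) := by
    apply mul_le_mul _ f3 (by positivity) _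
    · apply mul_le_mul f1 f2 (by positivity) (Real.rpow_nonneg (AA_nonneg z) _)
    · exact mul_nonneg (Real.rpow_nonneg (AA_nonneg z) _) (Real.rpow_nonneg hVp0 _)
  refine le_trans (le_of_eq ?_) prod_le
  have e : (12 * Ca) ^ (p + q) * ε ^ (p + q) = w ^ p * w ^ q := by
    rw [← Real.mul_rpow (by positivity) hε.le, ← hw_def, ← Real.rpow_add hw]
  rw [mul_assoc, ← mul_inv, e, mul_inv, ← mul_assoc]

private lemma coord_le_dist {m : ℕ} (z w : EuclideanSpace ℝ (Fin m)) (i : Fin m) :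
    |z i - w i| ≤ dist z w := by
  rw [EuclideanSpace.dist_eq]
  rw [← Real.sqrt_sq (abs_nonneg (z i - w i))]
  apply Real.sqrt_le_sqrt
  rw [sq_abs]
  have := Finset.single_le_sum (f := fun j => dist (z j) (w j) ^ 2)
    (fun j _ => sq_nonneg _) (Finset.mem_univ i)
  simpa [Real.dist_eq, sq_abs] using this

private lemma measurableSet_upper {n : ℕ} :
    MeasurableSet {z : EuclideanSpace ℝ (Fin (n+1)) | 0 < z (Fin.last n)} := by
  have hc : Continuous fun z : EuclideanSpace ℝ (Fin (n+1)) => z (Fin.last n) :=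
    (EuclideanSpace.proj (Fin.last n)).continuous
  exact measurableSet_lt measurable_const hc.measurable

private lemma fderiv_scale_bound {E' : Type*} [NormedAddCommGroup E'] [NormedSpace ℝ E']
    (φ : E' → ℝ) (hφ : ContDiff ℝ 1 φ) (M : ℝ) (hM0 : 0 ≤ M)
    (hM : ∀ x, ‖fderiv ℝ φ x‖ ≤ M) (c : E') {ε : ℝ} (hε : 0 < ε) (z : E') :
    ‖fderiv ℝ (fun w => φ (ε⁻¹ • (w - c))) z‖ ≤ ε⁻¹ * M := by
  have hg : HasFDerivAt (fun w : E' => ε⁻¹ • (w - c))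
      (ε⁻¹ • ContinuousLinearMap.id ℝ E') z :=
    ((hasFDerivAt_id z).sub_const c).const_smul ε⁻¹
  have hφd : DifferentiableAt ℝ φ (ε⁻¹ • (z - c)) := (hφ.differentiable one_ne_zero).differentiableAt
  have hcomp : HasFDerivAt (fun w => φ (ε⁻¹ • (w - c)))
      ((fderiv ℝ φ (ε⁻¹ • (z - c))).comp (ε⁻¹ • ContinuousLinearMap.id ℝ E')) z :=
    hφd.hasFDerivAt.comp z hg
  rw [hcomp.fderiv]
  have h1 : ‖(ε⁻¹ • ContinuousLinearMap.id ℝ E' : E' →L[ℝ] E')‖ ≤ ε⁻¹ := by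
    refine le_trans (ContinuousLinearMap.opNorm_smul_le _ _) ?_
    rw [Real.norm_eq_abs, abs_of_pos (inv_pos.2 hε)]
    calc ε⁻¹ * ‖(ContinuousLinearMap.id ℝ E' : E' →L[ℝ] E')‖ ≤ ε⁻¹ * 1 :=
          mul_le_mul_of_nonneg_left ContinuousLinearMap.norm_id_le (by positivity)
      _ = ε⁻¹ := mul_one _
  calc ‖(fderiv ℝ φ (ε⁻¹ • (z - c))).comp (ε⁻¹ • ContinuousLinearMap.id ℝ E')‖
      ≤ ‖fderiv ℝ φ (ε⁻¹ • (z - c))‖ * ‖(ε⁻¹ • ContinuousLinearMap.id ℝ E' : E' →L[ℝ] E')‖ :=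
        ContinuousLinearMap.opNorm_comp_le _ _
    _ ≤ M * ε⁻¹ := mul_le_mul (hM _) h1 (norm_nonneg _) hM0
    _ = ε⁻¹ * M := mul_comm _ _


/-- Non-validity of the improved Hardy–Sobolev inequality without symmetry:
for `1 < p < N`, `0 ≤ s < p`, `p*(s) = p(N−s)/(N−p)`, the infimum over nonzero
`u ∈ C_c^1(ℝ^N_+)` of the corresponding Rayleigh-type quotient is `0`. -/
theorem stmt19 {n : ℕ} (hn : 1 ≤ n) (p s : ℝ) (hp1 : 1 < p) (hpN : p < (n + 1 : ℝ))
    (hs0 : 0 ≤ s) (hsp : s < p) :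
    sInf {r : ℝ | ∃ u : EuclideanSpace ℝ (Fin (n + 1)) → ℝ,
        ContDiff ℝ 1 u ∧ HasCompactSupport u ∧
        tsupport u ⊆ {z : EuclideanSpace ℝ (Fin (n + 1)) | 0 < z (Fin.last n)} ∧
        u ≠ 0 ∧
        r = (∫ z in {z : EuclideanSpace ℝ (Fin (n + 1)) | 0 < z (Fin.last n)},
                ‖fderiv ℝ u z‖ ^ p) /
            ((∫ z in {z : EuclideanSpace ℝ (Fin (n + 1)) | 0 < z (Fin.last n)},
                |u z| ^ (p * ((n + 1 : ℝ) - s) / ((n + 1 : ℝ) - p))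
                  * AA z ^ (-(s / 2)) * Vp p z ^ (p / 2)
                  * (1 - XX z ^ (((n + 1 : ℝ) - p) / (2 * (p - 1))))
                      ^ (-((p - 1) * (p - s) / ((n + 1 : ℝ) - p))))
              ^ (p / (p * ((n + 1 : ℝ) - s) / ((n + 1 : ℝ) - p))))}
      = 0 := by

  have hS : MeasurableSet {z : EuclideanSpace ℝ (Fin (n+1)) | 0 < z (Fin.last n)} :=
    measurableSet_upper
  have hNp : (0:ℝ) < (n + 1 : ℝ) - p := by linarith
  have hNs : (0:ℝ) < (n + 1 : ℝ) - s := by linarith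
  have hp0 : (0:ℝ) < p := by linarith
  have he1 : 0 < p * ((n + 1 : ℝ) - s) / ((n + 1 : ℝ) - p) := by positivity
  have hnonneg : ∀ r ∈ {r : ℝ | ∃ u : EuclideanSpace ℝ (Fin (n + 1)) → ℝ,
        ContDiff ℝ 1 u ∧ HasCompactSupport u ∧
        tsupport u ⊆ {z : EuclideanSpace ℝ (Fin (n + 1)) | 0 < z (Fin.last n)} ∧
        u ≠ 0 ∧
        r = (∫ z in {z : EuclideanSpace ℝ (Fin (n + 1)) | 0 < z (Fin.last n)},
                ‖fderiv ℝ u z‖ ^ p) /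
            ((∫ z in {z : EuclideanSpace ℝ (Fin (n + 1)) | 0 < z (Fin.last n)},
                |u z| ^ (p * ((n + 1 : ℝ) - s) / ((n + 1 : ℝ) - p))
                  * AA z ^ (-(s / 2)) * Vp p z ^ (p / 2)
                  * (1 - XX z ^ (((n + 1 : ℝ) - p) / (2 * (p - 1))))
                      ^ (-((p - 1) * (p - s) / ((n + 1 : ℝ) - p))))
              ^ (p / (p * ((n + 1 : ℝ) - s) / ((n + 1 : ℝ) - p))))}, 0 ≤ r := by
    rintro r ⟨u, -, -, -, -, rfl⟩
    apply div_nonneg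
    · exact setIntegral_nonneg hS fun z _ => Real.rpow_nonneg (norm_nonneg _) p
    · exact Real.rpow_nonneg
        (setIntegral_nonneg hS fun z hz => integrand_nonneg hp1 hpN u hz) _
  have key : ∀ δ : ℝ, 0 < δ → ∃ r ∈ {r : ℝ | ∃ u : EuclideanSpace ℝ (Fin (n + 1)) → ℝ,
        ContDiff ℝ 1 u ∧ HasCompactSupport u ∧
        tsupport u ⊆ {z : EuclideanSpace ℝ (Fin (n + 1)) | 0 < z (Fin.last n)} ∧
        u ≠ 0 ∧
        r = (∫ z in {z : EuclideanSpace ℝ (Fin (n + 1)) | 0 < z (Fin.last n)},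
                ‖fderiv ℝ u z‖ ^ p) /
            ((∫ z in {z : EuclideanSpace ℝ (Fin (n + 1)) | 0 < z (Fin.last n)},
                |u z| ^ (p * ((n + 1 : ℝ) - s) / ((n + 1 : ℝ) - p))
                  * AA z ^ (-(s / 2)) * Vp p z ^ (p / 2)
                  * (1 - XX z ^ (((n + 1 : ℝ) - p) / (2 * (p - 1))))
                      ^ (-((p - 1) * (p - s) / ((n + 1 : ℝ) - p))))
              ^ (p / (p * ((n + 1 : ℝ) - s) / ((n + 1 : ℝ) - p))))}, r < δ := by
    intro δ hδ
    -- base bump function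
    set E := EuclideanSpace ℝ (Fin (n+1))
    let φb : ContDiffBump (0 : E) := ⟨1/2, 1, by norm_num, by norm_num⟩
    set φ : E → ℝ := ⇑φb with hφ_def
    have hφ1 : ContDiff ℝ 1 φ := φb.contDiff
    have hφsupp : tsupport φ ⊆ closedBall 0 1 := by
      rw [φb.tsupport_eq]
    have hφcs : HasCompactSupport φ := φb.hasCompactSupport
    have hφone : ∀ x ∈ closedBall (0:E) (1/2), φ x = 1 := fun x hx =>
      φb.one_of_mem_closedBall hx
    have hφnn : ∀ x, 0 ≤ φ x := fun x => φb.nonneg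
    obtain ⟨M, hM⟩ : ∃ M, ∀ x, ‖fderiv ℝ φ x‖ ≤ M :=
      (hφcs.fderiv (𝕜 := ℝ)).exists_bound_of_continuous (hφ1.continuous_fderiv one_ne_zero)
    have hM0 : 0 ≤ M := le_trans (norm_nonneg _) (hM 0)
    -- constants
    obtain ⟨ω, hω_def⟩ : ∃ ω : ℝ, ω = (volume (ball (0:E) 1)).toReal := ⟨_, rfl⟩
    have hω : 0 < ω := by
      rw [hω_def]
      exact ENNReal.toReal_pos (measure_ball_pos _ _ one_pos).ne' measure_ball_lt_top.ne
    obtain ⟨a0, ha0_def⟩ : ∃ a0 : ℝ, a0 = ((n + 1 : ℝ) - p) / (2 * (p - 1)) := ⟨_, rfl⟩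
    obtain ⟨q0, hq0_def⟩ : ∃ q0 : ℝ, q0 = (p - 1) * (p - s) / ((n + 1 : ℝ) - p) := ⟨_, rfl⟩
    obtain ⟨Ca, hCa_def⟩ : ∃ Ca : ℝ, Ca = max a0 1 := ⟨_, rfl⟩
    have hq0 : 0 < q0 := by
      rw [hq0_def]; exact div_pos (mul_pos (by linarith) (by linarith)) hNp
    have hCa : 0 < Ca := lt_of_lt_of_le one_pos (hCa_def ▸ le_max_right _ _)
    obtain ⟨κ0, hκ0_def⟩ : ∃ κ0 : ℝ,
        κ0 = (2:ℝ) ^ (-(s/2)) * ((12 * Ca) ^ (p + q0))⁻¹ := ⟨_, rfl⟩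
    have hκ0 : 0 < κ0 := by
      rw [hκ0_def]
      have h1 : (0:ℝ) < (2:ℝ) ^ (-(s/2)) := Real.rpow_pos_of_pos (by norm_num) _
      have h2 : (0:ℝ) < (12 * Ca) ^ (p + q0) := Real.rpow_pos_of_pos (by linarith) _
      positivity
    obtain ⟨K1, hK1_def⟩ : ∃ K1 : ℝ, K1 = M ^ p * ω := ⟨_, rfl⟩
    obtain ⟨K2, hK2_def⟩ : ∃ K2 : ℝ, K2 = κ0 * (ω / 2 ^ (n+1)) := ⟨_, rfl⟩
    have hK1 : 0 ≤ K1 := by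
      rw [hK1_def]; exact mul_nonneg (Real.rpow_nonneg hM0 _) hω.le
    have hK2 : 0 < K2 := by rw [hK2_def]; positivity
    obtain ⟨texp, htexp_def⟩ : ∃ t : ℝ,
        t = p / (p * ((n + 1 : ℝ) - s) / ((n + 1 : ℝ) - p)) := ⟨_, rfl⟩
    have htexp_eq : texp = ((n + 1 : ℝ) - p) / ((n + 1 : ℝ) - s) := by
      rw [htexp_def]; field_simp
    have htexp : 0 < texp := by rw [htexp_eq]; exact div_pos hNp hNs
    obtain ⟨Eexp, hEexp_def⟩ : ∃ Ee : ℝ,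
        Ee = ((n + 1 : ℝ) - p) - (((n + 1 : ℝ) - p) - q0) * texp := ⟨_, rfl⟩
    have hEexp : 0 < Eexp := by
      have : Eexp = (p - s) * ((n:ℝ)) / ((n + 1 : ℝ) - s) := by
        rw [hEexp_def, htexp_eq, hq0_def]
        field_simp
        ring
      rw [this]
      have hn' : (0:ℝ) < (n:ℝ) := by exact_mod_cast Nat.pos_of_ne_zero (by omega)
      exact div_pos (mul_pos (by linarith) hn') hNs
    obtain ⟨C, hC_def⟩ : ∃ C : ℝ, C = K1 / K2 ^ texp := ⟨_, rfl⟩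
    have hK2t : 0 < K2 ^ texp := Real.rpow_pos_of_pos hK2 _
    have hC0 : 0 ≤ C := by rw [hC_def]; positivity
    -- choice of ε
    obtain ⟨ε, hε_def⟩ : ∃ ε : ℝ, ε = min (1/10) ((δ/(C+1)) ^ (1/Eexp)) := ⟨_, rfl⟩
    have hδC : 0 < δ/(C+1) := div_pos hδ (by linarith)
    have hε : 0 < ε := by
      rw [hε_def]
      exact lt_min (by norm_num) (Real.rpow_pos_of_pos hδC _)
    have hε' : ε ≤ 1/10 := hε_def ▸ min_le_left _ _
    have hεE : C * ε ^ Eexp < δ := by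
      have hε₁ : ε ≤ (δ/(C+1)) ^ (1/Eexp) := hε_def ▸ min_le_right _ _
      have h1 : ε ^ Eexp ≤ ((δ/(C+1)) ^ (1/Eexp)) ^ Eexp :=
        Real.rpow_le_rpow hε.le hε₁ hEexp.le
      have h2 : ((δ/(C+1)) ^ (1/Eexp)) ^ Eexp = δ/(C+1) := by
        rw [← Real.rpow_mul hδC.le, one_div, inv_mul_cancel₀ hEexp.ne', Real.rpow_one]
      have h3 : C * ε ^ Eexp ≤ C * (δ/(C+1)) :=
        mul_le_mul_of_nonneg_left (h1.trans_eq h2) hC0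
      have h4 : C * (δ/(C+1)) < δ := by
        rw [mul_div_assoc']
        rw [div_lt_iff₀ (by linarith)]
        nlinarith
      linarith
    -- test function
    obtain ⟨c, hc_def⟩ : ∃ c : E, c = EuclideanSpace.single (Fin.last n) (2*ε) := ⟨_, rfl⟩
    obtain ⟨u, hu_def⟩ : ∃ u : E → ℝ, u = fun z => φ (ε⁻¹ • (z - c)) := ⟨_, rfl⟩
    have hu1 : ContDiff ℝ 1 u := by
      rw [hu_def]
      exact hφ1.comp ((contDiff_id.sub contDiff_const).const_smul ε⁻¹)
    have hnorm_smul : ∀ z : E, ‖ε⁻¹ • (z - c)‖ = ε⁻¹ * ‖z - c‖ := by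
      intro z
      rw [norm_smul, Real.norm_eq_abs, abs_of_pos (inv_pos.2 hε)]
    have hsupp : tsupport u ⊆ closedBall c ε := by
      apply closure_minimal _ isClosed_closedBall
      intro z hz
      have h1 : ε⁻¹ • (z - c) ∈ tsupport φ := by
        apply subset_tsupport
        rw [hu_def] at hz
        exact hz
      have h2 := hφsupp h1
      rw [mem_closedBall_zero_iff, hnorm_smul] at h2
      rw [mem_closedBall, dist_eq_norm]
      calc ‖z - c‖ = ε * (ε⁻¹ * ‖z - c‖) := by field_simp
        _ ≤ ε * 1 := mul_le_mul_of_nonneg_left h2 hε.le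
        _ = ε := mul_one _
    have hcoord : ∀ z ∈ closedBall c ε,
        ε ≤ z (Fin.last n) ∧ z (Fin.last n) ≤ 3*ε := by
      intro z hz
      have h1 := coord_le_dist z c (Fin.last n)
      have h2 : c (Fin.last n) = 2*ε := by
        rw [hc_def, EuclideanSpace.single_apply]; simp
      rw [h2] at h1
      rw [mem_closedBall] at hz
      have h3 : |z (Fin.last n) - 2*ε| ≤ ε := le_trans h1 hz
      rw [abs_le] at h3
      constructor <;> linarith [h3.1, h3.2]
    have hsubS : closedBall c ε ⊆ {z : E | 0 < z (Fin.last n)} := by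
      intro z hz
      have := (hcoord z hz).1
      exact lt_of_lt_of_le hε this
    have hu2 : HasCompactSupport u :=
      IsCompact.of_isClosed_subset (isCompact_closedBall c ε) isClosed_closure hsupp
    have hu3 : tsupport u ⊆ {z : E | 0 < z (Fin.last n)} := hsupp.trans hsubS
    have huc : u c = 1 := by
      rw [hu_def]
      simp only [sub_self, smul_zero]
      exact hφone 0 (mem_closedBall_self (by norm_num))
    have hu4 : u ≠ 0 := by
      intro h
      rw [h] at huc
      simpa using huc
    -- abbreviation for the weight integrand
    obtain ⟨F, hF_def⟩ : ∃ F : E → ℝ, F = fun z =>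
        |u z| ^ (p * ((n + 1 : ℝ) - s) / ((n + 1 : ℝ) - p))
          * AA z ^ (-(s / 2)) * Vp p z ^ (p / 2)
          * (1 - XX z ^ (((n + 1 : ℝ) - p) / (2 * (p - 1))))
              ^ (-((p - 1) * (p - s) / ((n + 1 : ℝ) - p))) := ⟨_, rfl⟩
    -- numerator bound
    have hder : ∀ z : E, ‖fderiv ℝ u z‖ ≤ ε⁻¹ * M := by
      intro z; rw [hu_def]; exact fderiv_scale_bound φ hφ1 M hM0 hM c hε z
    have hKmeas : MeasurableSet (closedBall c ε) := measurableSet_closedBall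
    have hfr : Module.finrank ℝ E = n + 1 := finrank_euclideanSpace_fin
    have hvolK : volume (closedBall c ε) = ENNReal.ofReal (ε^(n+1)) * volume (ball (0:E) 1) := by
      rw [Measure.addHaar_closedBall volume c hε.le, hfr]
    have hCMp : (0:ℝ) ≤ (ε⁻¹*M)^p := Real.rpow_nonneg (by positivity) p
    have hNum_ub : (∫ z in {z : E | 0 < z (Fin.last n)}, ‖fderiv ℝ u z‖ ^ p)
        ≤ (ε⁻¹*M)^p * (ε^(n+1) * ω) := by
      have hint : Integrable ((closedBall c ε).indicator fun _ => (ε⁻¹*M)^p)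
          (volume.restrict {z : E | 0 < z (Fin.last n)}) := by
        rw [integrable_indicator_iff hKmeas]
        refine integrableOn_const (ne_of_lt ?_)
        rw [Measure.restrict_apply hKmeas]
        exact lt_of_le_of_lt (measure_mono Set.inter_subset_left) measure_closedBall_lt_top
      have hbound : ∀ z : E, ‖fderiv ℝ u z‖ ^ p
          ≤ (closedBall c ε).indicator (fun _ => (ε⁻¹*M)^p) z := by
        intro z
        by_cases hzK : z ∈ closedBall c ε
        · rw [Set.indicator_of_mem hzK]
          exact Real.rpow_le_rpow (norm_nonneg _) (hder z) hp0.le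
        · rw [Set.indicator_of_notMem hzK]
          have h0 : fderiv ℝ u z = 0 := by
            by_contra hne
            exact hzK (hsupp (support_fderiv_subset (𝕜 := ℝ)
              (show z ∈ Function.support (fderiv ℝ u) from hne)))
          rw [h0, norm_zero, Real.zero_rpow hp0.ne']
      have hmono := integral_mono_of_nonneg
        (μ := volume.restrict {z : E | 0 < z (Fin.last n)})
        (f := fun z => ‖fderiv ℝ u z‖ ^ p)
        (g := (closedBall c ε).indicator fun _ => (ε⁻¹*M)^p)
        (Filter.Eventually.of_forall fun z => Real.rpow_nonneg (norm_nonneg _) p) hint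
        (Filter.Eventually.of_forall hbound)
      refine hmono.trans ?_
      rw [integral_indicator hKmeas, setIntegral_const, smul_eq_mul, mul_comm]
      apply mul_le_mul_of_nonneg_left _ hCMp
      have hle : (volume.restrict {z : E | 0 < z (Fin.last n)}) (closedBall c ε)
          ≤ volume (closedBall c ε) := by
        rw [Measure.restrict_apply hKmeas]
        exact measure_mono Set.inter_subset_left
      calc ((volume.restrict {z : E | 0 < z (Fin.last n)}) (closedBall c ε)).toReal
          ≤ (volume (closedBall c ε)).toReal :=
            ENNReal.toReal_mono measure_closedBall_lt_top.ne hle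
        _ = ε^(n+1) * ω := by
            rw [hvolK, ENNReal.toReal_mul, ENNReal.toReal_ofReal (by positivity), hω_def]
    -- continuity of the weight integrand
    have cAA : Continuous fun z : E => AA z := by
      unfold AA
      exact (continuous_finset_sum _ fun i _ =>
        ((EuclideanSpace.proj (Fin.castSucc i)).continuous).pow 2).add
        ((continuous_const.sub (EuclideanSpace.proj (Fin.last n)).continuous).pow 2)
    have cBB : Continuous fun z : E => BB z := by
      unfold BB
      exact (continuous_finset_sum _ fun i _ =>
        ((EuclideanSpace.proj (Fin.castSucc i)).continuous).pow 2).add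
        ((continuous_const.add (EuclideanSpace.proj (Fin.last n)).continuous).pow 2)
    have hexp_a : 0 < ((n + 1 : ℝ) - p) / (2 * (p - 1)) := by
      apply div_pos <;> linarith
    have hexp_b : 0 < ((n + 1 : ℝ) - 1) / (p - 1) := by
      have hn' : (1:ℝ) ≤ (n:ℝ) := by exact_mod_cast hn
      apply div_pos <;> linarith
    have hFzero : ∀ w ∉ closedBall c ε, F w = 0 := by
      intro w hw
      have hw' : u w = 0 := image_eq_zero_of_notMem_tsupport (fun hc => hw (hsupp hc))
      rw [hF_def]
      simp only [hw', abs_zero]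
      rw [Real.zero_rpow he1.ne']
      ring
    have hcontF : Continuous F := by
      rw [continuous_iff_continuousAt]
      intro z
      by_cases hzU : 0 < z (Fin.last n) ∧ z (Fin.last n) < 1
      · obtain ⟨hy0, hy1⟩ := hzU
        have hBpos : (0:ℝ) < BB z := by linarith [one_le_BB hy0.le]
        have hAApos : (0:ℝ) < AA z := AA_pos hy1
        have cX : ContinuousAt (fun z : E => XX z) z := by
          unfold XX
          exact (cAA.continuousAt).div (cBB.continuousAt) hBpos.ne'
        have cXa : ContinuousAt
            (fun z : E => XX z ^ (((n + 1 : ℝ) - p) / (2 * (p - 1)))) z :=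
          cX.rpow_const (Or.inr hexp_a.le)
        have cXb : ContinuousAt
            (fun z : E => XX z ^ (((n + 1 : ℝ) - 1) / (p - 1))) z :=
          cX.rpow_const (Or.inr hexp_b.le)
        have hXa1 : XX z ^ (((n + 1 : ℝ) - p) / (2 * (p - 1))) < 1 :=
          Real.rpow_lt_one (XX_nonneg hy0) (XX_lt_one hy0) hexp_a
        have hDne : (1 - XX z ^ (((n + 1 : ℝ) - p) / (2 * (p - 1)))) ≠ 0 :=
          (by linarith : (0:ℝ) < 1 - XX z ^ (((n + 1 : ℝ) - p) / (2 * (p - 1)))).ne'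
        have cVp : ContinuousAt (fun z : E => Vp p z) z := by
          unfold Vp
          apply ContinuousAt.div
          · exact (continuousAt_const.add cXb).sub
              (((continuousAt_const.mul cXa).mul
                (cBB.continuousAt.inv₀ hBpos.ne')).mul
                (((continuous_norm.pow 2).continuousAt).sub continuousAt_const))
          · exact (continuousAt_const.sub cXa).pow 2
          · exact pow_ne_zero 2 hDne
        have c1 : ContinuousAt
            (fun z : E => |u z| ^ (p * ((n + 1 : ℝ) - s) / ((n + 1 : ℝ) - p))) z :=
          (hu1.continuous.abs.continuousAt).rpow_const (Or.inr he1.le)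
        have c2 : ContinuousAt (fun z : E => AA z ^ (-(s/2))) z :=
          cAA.continuousAt.rpow_const (Or.inl hAApos.ne')
        have c3 : ContinuousAt (fun z : E => Vp p z ^ (p/2)) z :=
          cVp.rpow_const (Or.inr (by linarith : (0:ℝ) ≤ p/2))
        have c4 : ContinuousAt (fun z : E =>
            (1 - XX z ^ (((n + 1 : ℝ) - p) / (2 * (p - 1))))
              ^ (-((p - 1) * (p - s) / ((n + 1 : ℝ) - p)))) z :=
          by
            have cD : ContinuousAt (fun z : E =>
                1 - XX z ^ (((n + 1 : ℝ) - p) / (2 * (p - 1)))) z :=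
              continuousAt_const.sub cXa
            exact cD.rpow_const (Or.inl hDne)
        rw [hF_def]
        exact ((c1.mul c2).mul c3).mul c4
      · have hzK : z ∉ closedBall c ε := by
          intro hc
          obtain ⟨h1, h2⟩ := hcoord z hc
          exact hzU ⟨lt_of_lt_of_le hε h1, by linarith⟩
        have hev : F =ᶠ[nhds z] fun _ => (0:ℝ) :=
          Filter.eventually_of_mem
            (isClosed_closedBall.isOpen_compl.mem_nhds hzK)
            (fun w hw => hFzero w hw)
        exact hev.continuousAt
    have hFcs : HasCompactSupport F :=
      HasCompactSupport.intro (isCompact_closedBall c ε) hFzero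
    have hFint : Integrable F (volume.restrict {z : E | 0 < z (Fin.last n)}) :=
      (hcontF.integrable_of_hasCompactSupport hFcs).restrict
    -- lower bound for the denominator integral
    have hK2meas : MeasurableSet (closedBall c (ε/2)) := measurableSet_closedBall
    have hsub2 : closedBall c (ε/2) ⊆ closedBall c ε :=
      closedBall_subset_closedBall (by linarith)
    have hLBpos : (0:ℝ) < κ0 * (ε^(p+q0))⁻¹ :=
      mul_pos hκ0 (inv_pos.2 (Real.rpow_pos_of_pos hε _))
    have hglef : ∀ z ∈ {z : E | 0 < z (Fin.last n)},
        (closedBall c (ε/2)).indicator (fun _ => κ0 * (ε^(p+q0))⁻¹) z ≤ F z := by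
      intro z hz
      by_cases hzK : z ∈ closedBall c (ε/2)
      · rw [Set.indicator_of_mem hzK]
        have hdist : dist z c ≤ ε := le_trans (mem_closedBall.1 hzK) (by linarith)
        have hw := weight_lb hp1 hpN hs0 hsp hε hε' (z := z) (by rw [← hc_def]; exact hdist)
        have hu1z : u z = 1 := by
          rw [hu_def]
          apply hφone
          rw [mem_closedBall_zero_iff, hnorm_smul]
          have h9 : ‖z - c‖ ≤ ε/2 := by rw [← dist_eq_norm]; exact mem_closedBall.1 hzK
          calc ε⁻¹ * ‖z - c‖ ≤ ε⁻¹ * (ε/2) :=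
                mul_le_mul_of_nonneg_left h9 (inv_pos.2 hε).le
            _ = 1/2 := by field_simp
        rw [hF_def]
        simp only [hu1z, abs_one, Real.one_rpow, one_mul]
        rw [hκ0_def, hCa_def, ha0_def, hq0_def]
        exact hw
      · rw [Set.indicator_of_notMem hzK, hF_def]
        exact integrand_nonneg hp1 hpN u hz
    have hIZ_lb : κ0 * (ε^(p+q0))⁻¹ * ((ε/2)^(n+1) * ω)
        ≤ ∫ z in {z : E | 0 < z (Fin.last n)}, F z := by
      have hmono := integral_mono_of_nonneg
        (μ := volume.restrict {z : E | 0 < z (Fin.last n)})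
        (f := (closedBall c (ε/2)).indicator fun _ => κ0 * (ε^(p+q0))⁻¹)
        (g := F)
        (Filter.Eventually.of_forall fun z =>
          Set.indicator_nonneg (fun _ _ => hLBpos.le) z)
        hFint
        (ae_restrict_of_forall_mem hS hglef)
      refine le_trans (le_of_eq ?_) hmono
      rw [integral_indicator hK2meas, setIntegral_const, smul_eq_mul]
      have hvol2 : ((volume.restrict {z : E | 0 < z (Fin.last n)})
          (closedBall c (ε/2))).toReal = (ε/2)^(n+1) * ω := by
        rw [Measure.restrict_apply hK2meas,
          Set.inter_eq_left.2 (hsub2.trans hsubS),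
          Measure.addHaar_closedBall volume c (by positivity : (0:ℝ) ≤ ε/2), hfr,
          ENNReal.toReal_mul, ENNReal.toReal_ofReal (by positivity), hω_def]
      rw [measureReal_def, hvol2]
      ring
    have hI_pos : (0:ℝ) < ∫ z in {z : E | 0 < z (Fin.last n)}, F z :=
      lt_of_lt_of_le (mul_pos hLBpos (by positivity)) hIZ_lb
    -- conclusion
    refine ⟨_, ⟨u, hu1, hu2, hu3, hu4, rfl⟩, ?_⟩
    rw [← hF_def, ← htexp_def]
    have hLB2pos : (0:ℝ) < κ0 * (ε^(p+q0))⁻¹ * ((ε/2)^(n+1) * ω) :=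
      mul_pos hLBpos (by positivity)
    have hDen_lb : (κ0 * (ε^(p+q0))⁻¹ * ((ε/2)^(n+1) * ω)) ^ texp
        ≤ (∫ z in {z : E | 0 < z (Fin.last n)}, F z) ^ texp :=
      Real.rpow_le_rpow hLB2pos.le hIZ_lb htexp.le
    have hDen_pos : (0:ℝ) < (κ0 * (ε^(p+q0))⁻¹ * ((ε/2)^(n+1) * ω)) ^ texp :=
      Real.rpow_pos_of_pos hLB2pos _
    have hfrac := div_le_div₀ (mul_nonneg hCMp (by positivity)) hNum_ub hDen_pos hDen_lb
    refine lt_of_le_of_lt (hfrac.trans (le_of_eq ?_)) hεE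
    -- algebra: NumUB / LB^texp = C * ε^Eexp
    have hεp_ne : ∀ x : ℝ, ε ^ x ≠ 0 := fun x => (Real.rpow_pos_of_pos hε x).ne'
    have e1 : (ε⁻¹*M)^p * (ε^(n+1) * ω) = K1 * ε ^ ((n+1:ℝ) - p) := by
      rw [Real.mul_rpow (inv_nonneg.2 hε.le) hM0, Real.inv_rpow hε.le,
        Real.rpow_sub hε, ← Real.rpow_natCast ε (n+1), hK1_def]
      push_cast
      rw [div_eq_mul_inv]
      ring
    have e2 : κ0 * (ε^(p+q0))⁻¹ * ((ε/2)^(n+1) * ω) = K2 * ε ^ ((n+1:ℝ) - p - q0) := by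
      rw [div_pow, ← Real.rpow_natCast ε (n+1),
        show (n+1:ℝ) - p - q0 = ((n+1:ℕ):ℝ) - (p + q0) by push_cast; ring,
        Real.rpow_sub hε, hK2_def]
      have hne2 : ((2:ℝ))^(n+1) ≠ 0 := by positivity
      field_simp
    rw [e1, e2, Real.mul_rpow hK2.le (Real.rpow_nonneg hε.le _),
      ← Real.rpow_mul hε.le, hC_def, hEexp_def, Real.rpow_sub hε]
    have h8 : ε ^ ((n:ℝ) + 1 - p - ((n:ℝ) + 1 - p - q0) * texp)
        = ε ^ ((n:ℝ) + 1) / ε ^ p / ε ^ (((n:ℝ) + 1 - p - q0) * texp) := by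
      rw [← Real.rpow_sub hε, ← Real.rpow_sub hε]
    rw [h8]
    ring




  obtain ⟨r₀, hr₀T, -⟩ := key 1 one_pos
  have hbdd : BddBelow {r : ℝ | ∃ u : EuclideanSpace ℝ (Fin (n + 1)) → ℝ,
        ContDiff ℝ 1 u ∧ HasCompactSupport u ∧
        tsupport u ⊆ {z : EuclideanSpace ℝ (Fin (n + 1)) | 0 < z (Fin.last n)} ∧
        u ≠ 0 ∧
        r = (∫ z in {z : EuclideanSpace ℝ (Fin (n + 1)) | 0 < z (Fin.last n)},
                ‖fderiv ℝ u z‖ ^ p) /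
            ((∫ z in {z : EuclideanSpace ℝ (Fin (n + 1)) | 0 < z (Fin.last n)},
                |u z| ^ (p * ((n + 1 : ℝ) - s) / ((n + 1 : ℝ) - p))
                  * AA z ^ (-(s / 2)) * Vp p z ^ (p / 2)
                  * (1 - XX z ^ (((n + 1 : ℝ) - p) / (2 * (p - 1))))
                      ^ (-((p - 1) * (p - s) / ((n + 1 : ℝ) - p))))
              ^ (p / (p * ((n + 1 : ℝ) - s) / ((n + 1 : ℝ) - p))))} := ⟨0, fun r hr => hnonneg r hr⟩
  apply le_antisymm
  · by_contra h
    push_neg at h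
    obtain ⟨r, hrT, hr⟩ := key _ h
    exact absurd (csInf_le hbdd hrT) (not_le.2 hr)
  · exact le_csInf ⟨r₀, hr₀T⟩ fun r hr => hnonneg r hr
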